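/- Let L be a lattice in (V, B) and p a prime not dividing det L. Then every p-neighbor L' of L in V is of the form L' = L(v) := {x ∈ L : B(x,v) ∈ pℤ} + ℤ·(v/p) for some v ∈ L with v ∉ pL and B(v,v) ∈ p²ℤ. -/

import Mathlib

/-- A (full, integral) ℤ-lattice in a ℚ-quadratic space `(V, B)`: a finitely generated
ℤ-submodule spanning `V` over ℚ on which `B` takes integer values. -/
def IsLatticeIn {V : Type*} [AddCommGroup V] [Module ℚ V]
    (B : LinearMap.BilinForm ℚ V) (L : Submodule ℤ V) : Prop :=
  L.FG ∧ Submodule.span ℚ (L : Set V) = ⊤ ∧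
    ∀ x ∈ L, ∀ y ∈ L, ∃ n : ℤ, B x y = (n : ℚ)

/-- The index `[L : L ∩ L']` of the intersection of two ℤ-submodules in the first one. -/
noncomputable def subIndex {V : Type*} [AddCommGroup V] [Module ℚ V]
    (L L' : Submodule ℤ V) : ℕ :=
  AddSubgroup.relIndex L'.toAddSubgroup L.toAddSubgroup

/-- Two lattices `L, L'` in `V` are `p`-neighbors if `[L : L ∩ L'] = [L' : L ∩ L'] = p`. -/
def IsPNeighbor {V : Type*} [AddCommGroup V] [Module ℚ V] (p : ℕ)
    (L L' : Submodule ℤ V) : Prop :=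
  subIndex L L' = p ∧ subIndex L' L = p

/-- Kneser's neighbor `L(v) = L_v + ℤ·(v/p)` of `L` at the vector `v`, where
`L_v = {x ∈ L : B(x,v) ∈ pℤ}`. -/
noncomputable def neighborLattice {V : Type*} [AddCommGroup V] [Module ℚ V]
    (B : LinearMap.BilinForm ℚ V) (L : Submodule ℤ V) (p : ℕ) (v : V) :
    Submodule ℤ V :=
  (L ⊓ Submodule.comap ((LinearMap.flip B v).restrictScalars ℤ)
      (Submodule.span ℤ {(p : ℚ)})) ⊔ Submodule.span ℤ {((p : ℚ)⁻¹) • v}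

/-- if `p ∤ det L`, then every `p`-neighbor `L'` of `L` is of the form
`L(v) = {x ∈ L : B(x,v) ∈ pℤ} + ℤ·(v/p)` for some `v ∈ L` with `v ∉ pL` and
`B(v,v) ∈ p²ℤ`. -/

lemma key_matrix {V : Type*} [AddCommGroup V] [Module ℚ V]
    (B : LinearMap.BilinForm ℚ V) (L : Submodule ℤ V)
    (hLint : ∀ x ∈ L, ∀ y ∈ L, ∃ n : ℤ, B x y = (n : ℚ))
    {n : ℕ} (b : Module.Basis (Fin n) ℤ L) {p : ℕ} (hp : p.Prime)
    (d : ℤ) (hd : Matrix.det (Matrix.of fun i j => B (b i : V) (b j : V)) = (d : ℚ))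
    (hpd : ¬ (p : ℤ) ∣ d)
    (v : V) (hv : v ∈ L)
    (hall : ∀ x ∈ L, ∃ m : ℤ, B x v = (p : ℚ) * (m : ℚ)) :
    ∃ w ∈ L, v = (p : ℤ) • w := by
  haveI : Fact p.Prime := ⟨hp⟩
  -- integer Gram matrix
  have hBint : ∀ i j, ∃ m : ℤ, B (b i : V) (b j : V) = (m : ℚ) := fun i j =>
    hLint _ (b i).2 _ (b j).2
  set G : Matrix (Fin n) (Fin n) ℤ := Matrix.of fun i j => (hBint i j).choose with hG
  have hGc : ∀ i j, ((G i j : ℤ) : ℚ) = B (b i : V) (b j : V) := fun i j =>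
    ((hBint i j).choose_spec).symm
  have hmap : (Int.castRingHom ℚ).mapMatrix G = Matrix.of fun i j => B (b i : V) (b j : V) := by
    ext i j
    simpa using hGc i j
  have hdetG : G.det = d := by
    have := RingHom.map_det (Int.castRingHom ℚ) G
    rw [hmap, hd] at this
    have h2 : ((G.det : ℤ) : ℚ) = (d : ℚ) := this
    exact_mod_cast h2
  -- coordinates
  set c : Fin n → ℤ := fun j => b.repr ⟨v, hv⟩ j with hc
  have hvsum : (∑ i, c i • b i : L) = ⟨v, hv⟩ := b.sum_repr _
  have hvV : v = ∑ i, c i • (b i : V) := by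
    have := congrArg (Subtype.val) hvsum
    simpa using this.symm
  have hrow : ∀ i, (p : ℤ) ∣ ∑ j, c j * G i j := by
    intro i
    obtain ⟨m, hm⟩ := hall (b i : V) (b i).2
    have : B (b i : V) v = ((∑ j, c j * G i j : ℤ) : ℚ) := by
      rw [hvV, map_sum]
      push_cast
      congr 1
      ext j
      rw [map_zsmul, zsmul_eq_mul, hGc]
    rw [hm] at this
    refine ⟨m, ?_⟩
    exact_mod_cast this.symm
  -- reduce mod p
  set Gb : Matrix (Fin n) (Fin n) (ZMod p) := (Int.castRingHom (ZMod p)).mapMatrix G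
  set cb : Fin n → ZMod p := fun j => ((c j : ℤ) : ZMod p)
  have h0 : Gb.mulVec cb = 0 := by
    funext i
    have := hrow i
    obtain ⟨m, hm⟩ := this
    have : ((∑ j, c j * G i j : ℤ) : ZMod p) = 0 := by
      rw [hm]; push_cast [ZMod.natCast_self]; ring
    calc Gb.mulVec cb i = ∑ j, ((G i j : ℤ) : ZMod p) * ((c j : ℤ) : ZMod p) := by
          simp [Matrix.mulVec, dotProduct, Gb, cb]
      _ = 0 := by push_cast at this ⊢; rw [← this]; apply Finset.sum_congr rfl; intros; ring
  have hdetb : IsUnit Gb.det := by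
    rw [← RingHom.map_det]
    refine isUnit_iff_ne_zero.2 ?_
    simp only [Int.castRingHom, RingHom.coe_mk, MonoidHom.coe_mk, OneHom.coe_mk]
    rw [Ne, ZMod.intCast_zmod_eq_zero_iff_dvd]
    rw [hdetG]
    exact_mod_cast hpd
  have hcb : cb = 0 := by
    calc cb = (1 : Matrix (Fin n) (Fin n) (ZMod p)).mulVec cb := by simp
      _ = (Gb⁻¹ * Gb).mulVec cb := by rw [Matrix.nonsing_inv_mul _ hdetb]
      _ = Gb⁻¹.mulVec (Gb.mulVec cb) := (Matrix.mulVec_mulVec _ _ _).symm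
      _ = 0 := by rw [h0]; simp
  have hdvd : ∀ j, (p : ℤ) ∣ c j := by
    intro j
    have : cb j = 0 := by rw [hcb]; rfl
    exact (ZMod.intCast_zmod_eq_zero_iff_dvd _ _).1 this
  choose e he using hdvd
  refine ⟨(∑ j, e j • b j : L), (∑ j, e j • b j : L).2, ?_⟩
  have : (p : ℤ) • (∑ j, e j • b j : L) = ⟨v, hv⟩ := by
    rw [← hvsum, Finset.smul_sum]
    apply Finset.sum_congr rfl
    intro j _
    rw [smul_smul, ← he j]
  have := congrArg (Subtype.val) this
  simpa using this.symm

lemma toAddSubgroup_inf {V : Type*} [AddCommGroup V] [Module ℚ V] (L L' : Submodule ℤ V) :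
    (L ⊓ L').toAddSubgroup = L.toAddSubgroup ⊓ L'.toAddSubgroup := by
  ext x; simp [Submodule.mem_inf, AddSubgroup.mem_inf]

lemma prime_factor_one {p a b : ℕ} (hp : p.Prime) (hab : a * b = p) (hb : b ≠ 1) : a = 1 := by
  rcases (Nat.Prime.eq_one_or_self_of_dvd hp a ⟨b, hab.symm⟩) with h | h
  · exact h
  · subst h; exact absurd (Nat.eq_of_mul_eq_mul_left hp.pos (by rw [hab, mul_one])) hb

theorem pNeighbor_eq_neighborLattice {V : Type*} [AddCommGroup V]
    [Module ℚ V] [FiniteDimensional ℚ V] (B : LinearMap.BilinForm ℚ V)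
    (hBnd : B.Nondegenerate) (hBsymm : B.IsSymm)
    (L : Submodule ℤ V) (hL : IsLatticeIn B L)
    (p : ℕ) (hp : p.Prime)
    (hdet : ∃ (b : Module.Basis (Fin (Module.finrank ℚ V)) ℤ L) (d : ℤ),
      Matrix.det (Matrix.of fun i j => B (b i : V) (b j : V)) = (d : ℚ) ∧ ¬ (p : ℤ) ∣ d)
    (L' : Submodule ℤ V) (hL' : IsLatticeIn B L')
    (hneighbor : IsPNeighbor p L L') :
    ∃ v ∈ L, (¬ ∃ w ∈ L, v = (p : ℤ) • w) ∧
      (∃ n : ℤ, B v v = (p : ℚ) ^ 2 * (n : ℚ)) ∧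
      L' = neighborLattice B L p v := by
  obtain ⟨bL, d, hdQ, hpd⟩ := hdet
  obtain ⟨hfg, hspan, hLint⟩ := hL
  obtain ⟨hfg', hspan', hL'int⟩ := hL'
  obtain ⟨h1, h2⟩ := hneighbor
  have hp0 : (p : ℚ) ≠ 0 := Nat.cast_ne_zero.2 hp.ne_zero
  -- a vector v' ∈ L' \ L
  have hnle : ¬ (L' ≤ L) := by
    intro h
    have h3 : AddSubgroup.relIndex L.toAddSubgroup L'.toAddSubgroup = 1 :=
      AddSubgroup.relIndex_eq_one.2 (fun x hx => h hx)
    rw [subIndex, h3] at h2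
    exact hp.one_lt.ne' h2.symm
  obtain ⟨v', hv'L', hv'L⟩ := SetLike.not_le_iff_exists.1 hnle
  -- p • v' ∈ L
  have hpv' : (p : ℤ) • v' ∈ L := by
    have h := AddSubgroup.nsmul_index_mem
      (L.toAddSubgroup.addSubgroupOf L'.toAddSubgroup) (⟨v', hv'L'⟩ : L'.toAddSubgroup)
    rw [show (L.toAddSubgroup.addSubgroupOf L'.toAddSubgroup).index = p from h2] at h
    rw [AddSubgroup.mem_addSubgroupOf] at h
    simpa using h
  set v : V := (p : ℤ) • v' with hvdef
  have hvQ : v = (p : ℚ) • v' := (Int.cast_smul_eq_zsmul ℚ p v').symm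
  -- v ∉ pL
  have hvnp : ¬ ∃ w ∈ L, v = (p : ℤ) • w := by
    rintro ⟨w, hwL, hw⟩
    apply hv'L
    have h : (p : ℚ) • v' = (p : ℚ) • w := by
      rw [← hvQ, hw, ← Int.cast_smul_eq_zsmul ℚ (p : ℤ) w]
      norm_num
    have hww : v' = w := smul_right_injective V hp0 h
    rwa [hww]
  -- B v v ∈ p² ℤ
  obtain ⟨nv, hnv⟩ := hL'int v' hv'L' v' hv'L'
  have hBvv : ∃ n : ℤ, B v v = (p : ℚ) ^ 2 * (n : ℚ) := by
    refine ⟨nv, ?_⟩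
    rw [hvQ]
    simp only [map_smul, LinearMap.smul_apply, smul_eq_mul]
    rw [hnv]
    ring
  refine ⟨v, hpv', hvnp, hBvv, ?_⟩
  -- the neighbor sublattice N = L_v
  set N : Submodule ℤ V := L ⊓ Submodule.comap ((LinearMap.flip B v).restrictScalars ℤ)
      (Submodule.span ℤ {(p : ℚ)}) with hNdef
  have memN : ∀ x : V, x ∈ N ↔ x ∈ L ∧ ∃ m : ℤ, B x v = (p : ℚ) * (m : ℚ) := by
    intro x
    rw [hNdef, Submodule.mem_inf, Submodule.mem_comap]
    simp only [LinearMap.restrictScalars_apply, LinearMap.flip_apply,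
      Submodule.mem_span_singleton]
    constructor
    · rintro ⟨hx, m, hm⟩
      exact ⟨hx, m, by rw [← hm, zsmul_eq_mul]; push_cast; ring⟩
    · rintro ⟨hx, m, hm⟩
      exact ⟨hx, m, by rw [hm, zsmul_eq_mul]; push_cast; ring⟩
  set M : Submodule ℤ V := L ⊓ L' with hMdef
  -- M ≤ N
  have hMN : M ≤ N := by
    intro x hx
    rw [Submodule.mem_inf] at hx
    rw [memN]
    refine ⟨hx.1, ?_⟩
    obtain ⟨m, hm⟩ := hL'int x hx.2 v' hv'L'
    exact ⟨m, by rw [hvdef, map_zsmul, hm, zsmul_eq_mul]; push_cast; ring⟩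
  have hNL : N ≤ L := inf_le_left
  -- ¬ L ≤ N
  have hLnN : ¬ L ≤ N := by
    intro h
    have hall : ∀ x ∈ L, ∃ m : ℤ, B x v = (p : ℚ) * (m : ℚ) := fun x hx => ((memN x).1 (h hx)).2
    obtain ⟨w, hwL, hw⟩ := key_matrix B L hLint bL hp d hdQ hpd v (by simpa using hpv') hall
    exact hvnp ⟨w, hwL, hw⟩
  -- relIndex facts
  have hrML : AddSubgroup.relIndex M.toAddSubgroup L.toAddSubgroup = p := by
    rw [hMdef, toAddSubgroup_inf, inf_comm, AddSubgroup.inf_relIndex_right]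
    exact h1
  have hrML' : AddSubgroup.relIndex M.toAddSubgroup L'.toAddSubgroup = p := by
    rw [hMdef, toAddSubgroup_inf, AddSubgroup.inf_relIndex_right]
    exact h2
  -- N = M
  have hNM : N = M := by
    refine le_antisymm ?_ hMN
    have hchain := AddSubgroup.relIndex_mul_relIndex M.toAddSubgroup N.toAddSubgroup
      L.toAddSubgroup ((Submodule.toAddSubgroup_le _ _).2 hMN) ((Submodule.toAddSubgroup_le _ _).2 hNL)
    rw [hrML] at hchain
    have hb : AddSubgroup.relIndex N.toAddSubgroup L.toAddSubgroup ≠ 1 := by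
      intro hb1
      exact hLnN ((Submodule.toAddSubgroup_le _ _).1 (AddSubgroup.relIndex_eq_one.1 hb1))
    have ha : AddSubgroup.relIndex M.toAddSubgroup N.toAddSubgroup = 1 :=
      prime_factor_one hp hchain hb
    exact (Submodule.toAddSubgroup_le _ _).1 (AddSubgroup.relIndex_eq_one.1 ha)
  -- L' = M ⊔ span v'
  set K : Submodule ℤ V := M ⊔ Submodule.span ℤ {v'} with hKdef
  have hv'K : v' ∈ K := le_sup_right (α := Submodule ℤ V)
    (Submodule.mem_span_singleton_self v')
  have hKL' : K ≤ L' := by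
    rw [hKdef]
    refine sup_le (inf_le_right) ?_
    rw [Submodule.span_le, Set.singleton_subset_iff]
    exact hv'L'
  have hMK : M ≤ K := le_sup_left
  have hL'K : L' ≤ K := by
    have hchain := AddSubgroup.relIndex_mul_relIndex M.toAddSubgroup K.toAddSubgroup
      L'.toAddSubgroup ((Submodule.toAddSubgroup_le _ _).2 hMK) ((Submodule.toAddSubgroup_le _ _).2 hKL')
    rw [hrML'] at hchain
    have ha : AddSubgroup.relIndex M.toAddSubgroup K.toAddSubgroup ≠ 1 := by
      intro ha1
      have : K ≤ M := (Submodule.toAddSubgroup_le _ _).1 (AddSubgroup.relIndex_eq_one.1 ha1)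
      exact hv'L (Submodule.mem_inf.1 (this hv'K)).1
    have hb : AddSubgroup.relIndex K.toAddSubgroup L'.toAddSubgroup = 1 := by
      rcases (Nat.Prime.eq_one_or_self_of_dvd hp _
        ⟨AddSubgroup.relIndex K.toAddSubgroup L'.toAddSubgroup, hchain.symm⟩) with h | h
      · exact absurd h ha
      · rw [h] at hchain
        exact Nat.eq_of_mul_eq_mul_left hp.pos (by rw [hchain, mul_one])
    exact (Submodule.toAddSubgroup_le _ _).1 (AddSubgroup.relIndex_eq_one.1 hb)
  -- conclude
  have hfrac : ((p : ℚ)⁻¹) • v = v' := by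
    rw [hvQ, smul_smul, inv_mul_cancel₀ hp0, one_smul]
  rw [neighborLattice, ← hNdef, hNM, hfrac, ← hKdef]
  exact le_antisymm hL'K hKL'
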